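/- arXiv:0810.3223 — 5 statements merged into one kernel-verified Lean document; each statement's English description precedes it below -/
import Mathlib

section
/- Let G be a finite abelian group of order |G| > p where p is the smallest prime divisor of |G|. Then there exists a subset S of G \ {0} with |S| = |G|/p + p - 3 such that not every element of G is a nonempty sum of distinct elements of S; in other words, the critical number of G is at least |G|/p + p - 2. -/
/-- The set of all sums of nonempty subsets of `S`. -/
noncomputable def sumsNE {α : Type*} [AddCommMonoid α] (S : Finset α) : Finset α := by
  classical exact (S.powerset.erase ∅).image fun T => T.sum id

lemma exists_surj_hom_zmod (G : Type*) [AddCommGroup G] [Fintype G] (p : ℕ)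
    (hp : p.Prime) (hdvd : p ∣ Fintype.card G) :
    ∃ φ : G →+ ZMod p, Function.Surjective φ := by
  classical
  obtain ⟨ι, hι, n, hn, ⟨e⟩⟩ := AddCommGroup.equiv_directSum_zmod_of_finite' G
  have hNZ : ∀ i, NeZero (n i) := fun i => ⟨by have := hn i; omega⟩
  have hNZp : NeZero p := ⟨hp.pos.ne'⟩
  have hcard : Fintype.card G = ∏ i, n i := by
    rw [Fintype.card_congr (e.toEquiv.trans (DFinsupp.equivFunOnFintype)),
      Fintype.card_pi]
    simp [ZMod.card]
  obtain ⟨i, -, hpi⟩ := hp.prime.exists_mem_finset_dvd (by rw [hcard] at hdvd; exact hdvd)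
  let π : (DirectSum ι fun j => ZMod (n j)) →+ ZMod (n i) := DFinsupp.evalAddMonoidHom i
  let c : ZMod (n i) →+ ZMod p := (ZMod.castHom hpi (ZMod p)).toAddMonoidHom
  refine ⟨(c.comp π).comp e.toAddMonoidHom, ?_⟩
  intro y
  obtain ⟨k, rfl⟩ := ZMod.natCast_zmod_surjective (n := p) y
  refine ⟨e.symm (DirectSum.of _ i (k : ZMod (n i))), ?_⟩
  have h1 : ((c.comp π).comp e.toAddMonoidHom) (e.symm ((DirectSum.of (fun i => ZMod (n i)) i) (k : ZMod (n i)))) = c (π ((DirectSum.of (fun i => ZMod (n i)) i) (k : ZMod (n i)))) := by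
    simp
  rw [h1]
  have h2 : π ((DirectSum.of (fun i => ZMod (n i)) i) (k : ZMod (n i))) = (k : ZMod (n i)) := by
    exact DirectSum.of_eq_same i _
  rw [h2]
  simp [c]

theorem stmt1 (G : Type*) [AddCommGroup G] [Fintype G] (p : ℕ)
    (hp : p.Prime) (hdvd : p ∣ Fintype.card G)
    (hmin : ∀ r : ℕ, r.Prime → r ∣ Fintype.card G → p ≤ r)
    (hlt : p < Fintype.card G) :
    ∃ S : Finset G, (0 : G) ∉ S ∧ S.card = Fintype.card G / p + p - 3 ∧
      sumsNE S ≠ Finset.univ := by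
  classical
  set N := Fintype.card G with hN
  have hNpos : 0 < N := Fintype.card_pos
  have hppos : 0 < p := hp.pos
  have hp2 : 2 ≤ p := hp.two_le
  have hNZp : NeZero p := ⟨hppos.ne'⟩
  have hFact : Fact p.Prime := ⟨hp⟩
  -- m := N / p, with p ≤ m
  set m := N / p with hm
  have hmul : p * m = N := Nat.mul_div_cancel' hdvd
  have hm1 : 1 < m := by
    rcases Nat.lt_or_ge 1 m with h | h
    · exact h
    · interval_cases m <;> omega
  have hpm : p ≤ m := by
    have hq := Nat.minFac_prime (by omega : m ≠ 1)
    have hqdvd : m.minFac ∣ N := (Nat.minFac_dvd m).trans ⟨p, by rw [← hmul]; ring⟩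
    exact le_trans (hmin _ hq hqdvd) (Nat.minFac_le (by omega))
  obtain ⟨φ, hφ⟩ := exists_surj_hom_zmod G p hp hdvd
  -- fibers
  have hfibcard : ∀ c : ZMod p, (Finset.univ.filter (fun g => φ g = c)).card = m := by
    -- all fibers have equal cardinality
    have key : ∀ c : ZMod p, (Finset.univ.filter (fun g => φ g = c)).card
        = (Finset.univ.filter (fun g => φ g = 0)).card := by
      intro c
      obtain ⟨x, hx⟩ := hφ c
      apply Finset.card_nbij' (fun g => g - x) (fun g => g + x)
      · intro g hg
        simp only [Finset.mem_coe, Finset.mem_filter, Finset.mem_univ, true_and] at hg ⊢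
        rw [map_sub, hg, hx, sub_self]
      · intro g hg
        simp only [Finset.mem_coe, Finset.mem_filter, Finset.mem_univ, true_and] at hg ⊢
        rw [map_add, hg, hx, zero_add]
      · intro g _; simp
      · intro g _; simp
    have hsum : ∑ c : ZMod p, (Finset.univ.filter (fun g => φ g = c)).card = N := by
      rw [← Finset.card_eq_sum_card_fiberwise (f := φ) (by intro _ _; simp)]
      rfl
    have : p * (Finset.univ.filter (fun g => φ g = 0)).card = N := by
      calc p * (Finset.univ.filter (fun g => φ g = 0)).card
          = ∑ _c : ZMod p, (Finset.univ.filter (fun g => φ g = 0)).card := by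
            rw [Finset.sum_const, Finset.card_univ, ZMod.card, smul_eq_mul]
        _ = N := by rw [← hsum]; exact Finset.sum_congr rfl fun c _ => (key c).symm
    intro c
    rw [key c]
    have := Nat.eq_of_mul_eq_mul_left hppos (this.trans hmul.symm)
    omega
  set A : Finset G := (Finset.univ.filter (fun g => φ g = 0)).erase 0 with hA
  have hAcard : A.card = m - 1 := by
    rw [hA, Finset.card_erase_of_mem (by simp), hfibcard]
  have hTle : p - 2 ≤ (Finset.univ.filter (fun g => φ g = 1)).card := by
    rw [hfibcard]; omega
  obtain ⟨T, hTsub, hTcard⟩ := Finset.exists_subset_card_eq hTle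
  have hT1 : ∀ t ∈ T, φ t = 1 := by
    intro t ht
    have := hTsub ht
    simpa using this
  refine ⟨A ∪ T, ?_, ?_, ?_⟩
  · -- 0 ∉ S
    simp only [Finset.mem_union, not_or]
    constructor
    · simp [hA]
    · intro h0
      have := hT1 0 h0
      simp at this
  · -- card
    have hdisj : Disjoint A T := by
      rw [Finset.disjoint_left]
      intro a haA haT
      have h1 : φ a = 0 := by
        rw [hA] at haA
        have := Finset.mem_of_mem_erase haA
        simpa using this
      have h2 := hT1 a haT
      rw [h1] at h2
      exact one_ne_zero h2.symm
    rw [Finset.card_union_of_disjoint hdisj, hAcard, hTcard]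
    omega
  · -- sumsNE ≠ univ
    intro hcontra
    obtain ⟨y, hy⟩ := hφ (-1)
    have hy_mem : y ∈ sumsNE (A ∪ T) := by rw [hcontra]; exact Finset.mem_univ y
    rw [sumsNE] at hy_mem
    simp only [Finset.mem_image, Finset.mem_erase, Finset.mem_powerset] at hy_mem
    obtain ⟨U, ⟨hUne, hUsub⟩, hUsum⟩ := hy_mem
    have hφsum : φ (U.sum id) = ∑ t ∈ U, φ t := by
      rw [map_sum]; rfl
    have hsplit : ∑ t ∈ U, φ t = ((U.filter (fun t => t ∉ A)).card : ZMod p) := by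
      rw [← Finset.sum_filter_add_sum_filter_not U (fun t => t ∈ A)]
      have e1 : ∑ t ∈ U.filter (fun t => t ∈ A), φ t = 0 := by
        apply Finset.sum_eq_zero
        intro t ht
        rw [Finset.mem_filter] at ht
        have := Finset.mem_of_mem_erase (hA ▸ ht.2)
        simpa using this
      have e2 : ∑ t ∈ U.filter (fun t => t ∉ A), φ t
          = ((U.filter (fun t => t ∉ A)).card : ZMod p) := by
        rw [Finset.sum_congr rfl (fun t ht => ?_), Finset.sum_const, nsmul_eq_mul, mul_one]
        rw [Finset.mem_filter] at ht
        have htU : t ∈ A ∪ T := hUsub ht.1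
        rw [Finset.mem_union] at htU
        exact hT1 t (htU.resolve_left ht.2)
      rw [e1, e2, zero_add]
    set k := (U.filter (fun t => t ∉ A)).card with hk
    have hkle : k ≤ p - 2 := by
      rw [hk, ← hTcard]
      apply Finset.card_le_card
      intro t ht
      rw [Finset.mem_filter] at ht
      have htU : t ∈ A ∪ T := hUsub ht.1
      rw [Finset.mem_union] at htU
      exact htU.resolve_left ht.2
    have : ((k : ZMod p)) = -1 := by
      rw [← hsplit, ← hφsum, hUsum, hy]
    have hk1 : ((k + 1 : ℕ) : ZMod p) = 0 := by
      push_cast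
      rw [this]; ring
    rw [ZMod.natCast_eq_zero_iff] at hk1
    have := Nat.le_of_dvd (by omega) hk1
    omega
end

section
/- Let H be a subgroup of a finite abelian group G of index p (where p is a prime), let h ∈ G \ H, and let S = (H \ {0}) ∪ {h₁, ..., h_{p-2}} where each hᵢ ∈ h + H. Then Σ(S) is contained in H ∪ (h+H) ∪ ... ∪ ((p-2)h + H), and hence |Σ(S)| ≤ (p-1)|H| < |G|. -/
open Pointwise

theorem stmt2 (G : Type*) [AddCommGroup G] [Fintype G] [DecidableEq G]
    (p : ℕ) (hp : p.Prime) (H : AddSubgroup G) [DecidablePred (· ∈ H)]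
    (hidx : H.index = p) (h : G) (hh : h ∉ H)
    (f : Fin (p - 2) → G) (hinj : Function.Injective f)
    (hf : ∀ i, f i - h ∈ H)
    (S : Finset G)
    (hS : S = (Finset.univ.filter (· ∈ H)).erase 0 ∪ Finset.image f Finset.univ) :
    (↑(sumsNE S) : Set G) ⊆ (⋃ ν ∈ Finset.range (p - 1), ((ν • h) +ᵥ (H : Set G))) ∧
    (sumsNE S).card ≤ (p - 1) * Nat.card H ∧ (p - 1) * Nat.card H < Fintype.card G := by
  classical
  have hp2 : 2 ≤ p := hp.two_le
  have key : ∀ x ∈ sumsNE S, ∃ k < p - 1, x - k • h ∈ H := by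
    intro x hx
    simp only [sumsNE, Finset.mem_image, Finset.mem_erase, Finset.mem_powerset] at hx
    obtain ⟨T, ⟨hTne, hTS⟩, rfl⟩ := hx
    set B := T.filter (fun t => ¬ t ∈ H) with hB
    have hBf : B ⊆ Finset.image f Finset.univ := by
      intro b hb
      simp only [hB, Finset.mem_filter] at hb
      have hbS := hTS hb.1
      rw [hS] at hbS
      rcases Finset.mem_union.1 hbS with h1 | h2
      · exact absurd (Finset.mem_filter.1 (Finset.mem_erase.1 h1).2).2 hb.2
      · exact h2
    refine ⟨B.card, ?_, ?_⟩
    · have hle : B.card ≤ p - 2 := by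
        calc B.card ≤ (Finset.image f Finset.univ).card := Finset.card_le_card hBf
          _ = p - 2 := by
            rw [Finset.card_image_of_injective _ hinj, Finset.card_univ, Fintype.card_fin]
      omega
    · have hsplit := Finset.sum_filter_add_sum_filter_not T (fun t => t ∈ H) id
      have hA : (T.filter (fun t => t ∈ H)).sum id ∈ H :=
        AddSubgroup.sum_mem _ (fun t ht => (Finset.mem_filter.1 ht).2)
      have hBmem : ∀ b ∈ B, b - h ∈ H := by
        intro b hb
        obtain ⟨i, _, rfl⟩ := Finset.mem_image.1 (hBf hb)
        exact hf i
      have hBsum : B.sum id - B.card • h ∈ H := by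
        have h1 : (B.sum fun b => b - h) ∈ H := AddSubgroup.sum_mem _ hBmem
        simpa [Finset.sum_sub_distrib] using h1
      have heq : T.sum id - B.card • h =
          (T.filter (fun t => t ∈ H)).sum id + (B.sum id - B.card • h) := by
        rw [← hsplit]; abel
      rw [heq]
      exact AddSubgroup.add_mem _ hA hBsum
  have hfiltcard : (Finset.univ.filter (· ∈ H)).card = Nat.card H := by
    rw [Nat.card_eq_fintype_card, Fintype.card_subtype]
  refine ⟨?_, ?_, ?_⟩
  · intro x hx
    obtain ⟨k, hk, hkH⟩ := key x hx
    simp only [Set.mem_iUnion]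
    exact ⟨k, Finset.mem_range.2 hk, x - k • h, hkH, by show k • h + (x - k • h) = x; abel⟩
  · have hsub : sumsNE S ⊆ (Finset.range (p - 1)).biUnion
        (fun ν => Finset.image (fun g => ν • h + g) (Finset.univ.filter (· ∈ H))) := by
      intro x hx
      obtain ⟨k, hk, hkH⟩ := key x hx
      refine Finset.mem_biUnion.2 ⟨k, Finset.mem_range.2 hk, Finset.mem_image.2
        ⟨x - k • h, Finset.mem_filter.2 ⟨Finset.mem_univ _, hkH⟩, by abel⟩⟩
    calc (sumsNE S).card ≤ _ := Finset.card_le_card hsub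
      _ ≤ ∑ ν ∈ Finset.range (p - 1),
            (Finset.image (fun g => ν • h + g) (Finset.univ.filter (· ∈ H))).card :=
          Finset.card_biUnion_le
      _ ≤ ∑ _ν ∈ Finset.range (p - 1), (Finset.univ.filter (· ∈ H)).card :=
          Finset.sum_le_sum (fun ν _ => Finset.card_image_le)
      _ = (p - 1) * Nat.card H := by rw [Finset.sum_const, Finset.card_range, hfiltcard, smul_eq_mul]
  · have hcard : Fintype.card G = p * Nat.card H := by
      rw [← Nat.card_eq_fintype_card, ← hidx, ← AddSubgroup.index_mul_card H]
    have hpos : 0 < Nat.card H := Nat.card_pos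
    rw [hcard]
    exact (Nat.mul_lt_mul_right hpos).2 (by omega)
end

section
/- (Cauchy–Davenport for several sets) Let G be a cyclic group of prime order p, s ≥ 2, and A₁, ..., A_s nonempty subsets of G. Then |A₁ + ... + A_s| ≥ min{p, |A₁| + ... + |A_s| - s + 1}. -/
open Pointwise

lemma aux_image_sum {p s : ℕ} (A : Fin (s+1) → Finset (ZMod p)) :
    ((Fintype.piFinset A).image fun f => ∑ i, f i) =
      ((Fintype.piFinset (fun i => A (Fin.castSucc i))).image fun f => ∑ i, f i)
        + A (Fin.last s) := by
  apply subset_antisymm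
  · intro x hx
    simp only [Finset.mem_image, Fintype.mem_piFinset] at hx
    obtain ⟨f, hf, rfl⟩ := hx
    rw [Fin.sum_univ_castSucc]
    exact Finset.add_mem_add
      (Finset.mem_image.2 ⟨fun i => f (Fin.castSucc i),
        Fintype.mem_piFinset.2 fun i => hf _, rfl⟩) (hf _)
  · intro x hx
    obtain ⟨a, ha, b, hb, rfl⟩ := Finset.mem_add.1 hx
    simp only [Finset.mem_image, Fintype.mem_piFinset] at ha ⊢
    obtain ⟨g, hg, rfl⟩ := ha
    refine ⟨Fin.snoc g b, ?_, ?_⟩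
    · intro i
      refine Fin.lastCases ?_ ?_ i
      · simpa using hb
      · intro j; simpa using hg j
    · rw [Fin.sum_univ_castSucc]
      simp

lemma aux_cd (p : ℕ) (hp : p.Prime) :
    ∀ s (A : Fin s → Finset (ZMod p)), (∀ i, (A i).Nonempty) →
      min p (∑ i, (A i).card - s + 1) ≤
        ((Fintype.piFinset A).image fun f => ∑ i, f i).card := by
  intro s
  induction s with
  | zero =>
    intro A hA
    have : ((Fintype.piFinset A).image fun f => ∑ i, f i).Nonempty := by
      apply Finset.Nonempty.image
      exact Fintype.piFinset_nonempty.2 hA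
    have h1 : 1 ≤ ((Fintype.piFinset A).image fun f => ∑ i, f i).card :=
      Finset.Nonempty.card_pos this
    have h0 : (∑ i, (A i).card) = 0 := by simp
    rw [h0]
    exact le_trans (min_le_right _ _) h1
  | succ n ih =>
    intro A hA
    have key := aux_image_sum A
    set X := ((Fintype.piFinset (fun i => A (Fin.castSucc i))).image fun f => ∑ i, f i) with hX
    have hXne : X.Nonempty :=
      Finset.Nonempty.image (Fintype.piFinset_nonempty.2 fun i => hA _) _
    have hcd := ZMod.cauchy_davenport hp hXne (hA (Fin.last n))
    have hih := ih (fun i => A (Fin.castSucc i)) (fun i => hA _)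
    have hT : n ≤ ∑ i : Fin n, (A (Fin.castSucc i)).card := by
      calc n = ∑ _i : Fin n, 1 := by simp
        _ ≤ _ := Finset.sum_le_sum fun i _ => Finset.Nonempty.card_pos (hA _)
    have ha : 1 ≤ (A (Fin.last n)).card := Finset.Nonempty.card_pos (hA _)
    have hsum : ∑ i, (A i).card =
        (∑ i : Fin n, (A (Fin.castSucc i)).card) + (A (Fin.last n)).card := by
      rw [Fin.sum_univ_castSucc]
    rw [key, hsum]
    generalize hm : (X + A (Fin.last n)).card = m at hcd ⊢
    generalize (∑ i : Fin n, (A (Fin.castSucc i)).card) = T at *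
    generalize (A (Fin.last n)).card = a at *
    generalize X.card = c at *
    omega

theorem stmt3 (p s : ℕ) (hp : p.Prime) (hs : 2 ≤ s)
    (A : Fin s → Finset (ZMod p)) (hA : ∀ i, (A i).Nonempty) :
    min p (∑ i, (A i).card - s + 1) ≤
      ((Fintype.piFinset A).image fun f => ∑ i, f i).card := by
  exact aux_cd p hp s A hA
end

section
/- Let G = ℤ/qℤ with q prime and let S₀ ⊆ G \ {0} with |S₀| = λ ≥ 2. Then |Σ(S₀) ∪ {0}| ≥ min{q, 2λ - 1}. -/
open Finset

variable {q : ℕ}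

/-- All subset sums (including the empty subset). -/
noncomputable def PS11 (S : Finset (ZMod q)) : Finset (ZMod q) :=
  S.powerset.image fun t => t.sum id

lemma mem_PS11 {S : Finset (ZMod q)} {x : ZMod q} :
    x ∈ PS11 S ↔ ∃ t, t ⊆ S ∧ t.sum id = x := by
  simp [PS11]

lemma zero_mem_PS11 (S : Finset (ZMod q)) : (0 : ZMod q) ∈ PS11 S :=
  mem_PS11.mpr ⟨∅, empty_subset _, rfl⟩

lemma mem_PS11_of_mem {S : Finset (ZMod q)} {a : ZMod q} (ha : a ∈ S) : a ∈ PS11 S :=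
  mem_PS11.mpr ⟨{a}, by simpa using ha, by simp⟩

lemma sums0_eq (S : Finset (ZMod q)) : insert (0 : ZMod q) (sumsNE S) = PS11 S := by
  classical
  ext x
  simp only [sumsNE, PS11, mem_insert, mem_image, mem_erase, mem_powerset]
  constructor
  · rintro (rfl | ⟨t, ⟨hne, hts⟩, rfl⟩)
    · exact ⟨∅, by simp⟩
    · exact ⟨t, hts, rfl⟩
  · rintro ⟨t, hts, rfl⟩
    rcases eq_or_ne t ∅ with rfl | hne
    · left; simp
    · right; exact ⟨t, ⟨hne, hts⟩, rfl⟩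

lemma PS11_insert {S : Finset (ZMod q)} {a : ZMod q} (ha : a ∉ S) :
    PS11 (insert a S) = PS11 S ∪ (PS11 S).image (· + a) := by
  ext x
  simp only [mem_union, mem_image, mem_PS11]
  constructor
  · rintro ⟨t, hts, rfl⟩
    by_cases hat : a ∈ t
    · right
      refine ⟨(t.erase a).sum id, ⟨t.erase a, ?_, rfl⟩, ?_⟩
      · intro y hy
        rcases mem_insert.mp (hts (mem_of_mem_erase hy)) with rfl | h
        · exact absurd rfl (ne_of_mem_erase hy)
        · exact h
      · rw [← Finset.add_sum_erase t id hat]; exact (add_comm _ _)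
    · left
      refine ⟨t, fun y hy => ?_, rfl⟩
      rcases mem_insert.mp (hts hy) with rfl | h
      · exact absurd hy hat
      · exact h
  · rintro (⟨t, hts, rfl⟩ | ⟨y, ⟨t, hts, rfl⟩, rfl⟩)
    · exact ⟨t, hts.trans (subset_insert _ _), rfl⟩
    · refine ⟨insert a t, insert_subset_insert a hts, ?_⟩
      rw [sum_insert (fun h => ha (hts h))]
      simp [add_comm]

lemma PS11_erase_union {S : Finset (ZMod q)} {a : ZMod q} (ha : a ∈ S) :
    PS11 S = PS11 (S.erase a) ∪ (PS11 (S.erase a)).image (· + a) := by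
  conv_lhs => rw [← insert_erase ha]
  exact PS11_insert (notMem_erase a S)

lemma cast_ne_zero_of_lt {n : ℕ} (h1 : 0 < n) (h2 : n < q) : (n : ZMod q) ≠ 0 := by
  intro h
  rw [ZMod.natCast_eq_zero_iff] at h
  exact absurd (Nat.le_of_dvd h1 h) (by omega)

lemma shift_univ [NeZero q] (hq : q.Prime) {T : Finset (ZMod q)} {a : ZMod q} (ha : a ≠ 0)
    (h0 : T.Nonempty) (hcl : T.image (· + a) = T) : T = Finset.univ := by
  haveI : NeZero q := ⟨hq.ne_zero⟩
  haveI : Fact q.Prime := ⟨hq⟩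
  have step : ∀ x ∈ T, x + a ∈ T := fun x hx => by
    rw [← hcl]; exact mem_image_of_mem _ hx
  have iter : ∀ n : ℕ, ∀ x ∈ T, x + n • a ∈ T := by
    intro n
    induction n with
    | zero => simp
    | succ n ih =>
      intro x hx
      rw [succ_nsmul, ← add_assoc]
      exact step _ (ih x hx)
  obtain ⟨x, hx⟩ := h0
  apply eq_univ_iff_forall.mpr
  intro y
  have hn : ((((y - x) * a⁻¹).val : ℕ) : ZMod q) = (y - x) * a⁻¹ :=
    ZMod.natCast_rightInverse _
  have hxy : x + (((y - x) * a⁻¹).val) • a = y := by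
    rw [nsmul_eq_mul, hn, mul_assoc, inv_mul_cancel₀ ha, mul_one]
    ring
  rw [← hxy]
  exact iter _ x hx

lemma moment_eq (hq : q.Prime) {T : Finset (ZMod q)} {a u v : ZMod q} (ha : a ≠ 0)
    (hU : T.image (· + a) \ T = {u}) (hV : T \ T.image (· + a) = {v}) :
    12 * (T.card : ZMod q) * (∑ x ∈ T, x ^ 2) =
      12 * (∑ x ∈ T, x) ^ 2 + ((T.card : ZMod q) ^ 4 - (T.card : ZMod q) ^ 2) * a ^ 2 := by
  haveI : Fact q.Prime := ⟨hq⟩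
  set M := (T.card : ZMod q) with hM
  set A := T.image (· + a) with hA
  have key : ∀ f : ZMod q → ZMod q, ∑ x ∈ T, f (x + a) = ∑ x ∈ T, f x + (f u - f v) := by
    intro f
    have h1 : ∑ x ∈ A, f x = ∑ x ∈ T, f (x + a) :=
      Finset.sum_image (fun x _ y _ h => by exact add_right_cancel h)
    have h2 : ∑ x ∈ A \ (A ∩ T), f x + ∑ x ∈ A ∩ T, f x = ∑ x ∈ A, f x :=
      Finset.sum_sdiff inter_subset_left
    have h3 : ∑ x ∈ T \ (T ∩ A), f x + ∑ x ∈ T ∩ A, f x = ∑ x ∈ T, f x :=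
      Finset.sum_sdiff inter_subset_left
    rw [sdiff_inter_self_left, hU, sum_singleton] at h2
    rw [sdiff_inter_self_left, hV, sum_singleton] at h3
    rw [inter_comm] at h3
    rw [← h1, ← h2, ← h3]
    ring
  have s1 : ∑ x ∈ T, (x + a) = (∑ x ∈ T, x) + M * a := by
    rw [Finset.sum_add_distrib, Finset.sum_const, nsmul_eq_mul]
  have s2 : ∑ x ∈ T, (x + a) ^ 2 = (∑ x ∈ T, x ^ 2) + 2 * a * (∑ x ∈ T, x) + M * a ^ 2 := by
    calc ∑ x ∈ T, (x + a) ^ 2 = ∑ x ∈ T, (x ^ 2 + 2 * a * x + a ^ 2) :=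
          sum_congr rfl fun x _ => by ring
      _ = _ := by
          rw [sum_add_distrib, sum_add_distrib, ← mul_sum, sum_const, nsmul_eq_mul]
  have s3 : ∑ x ∈ T, (x + a) ^ 3 =
      (∑ x ∈ T, x ^ 3) + 3 * a * (∑ x ∈ T, x ^ 2) + 3 * a ^ 2 * (∑ x ∈ T, x) + M * a ^ 3 := by
    calc ∑ x ∈ T, (x + a) ^ 3
        = ∑ x ∈ T, (x ^ 3 + 3 * a * x ^ 2 + 3 * a ^ 2 * x + a ^ 3) :=
          sum_congr rfl fun x _ => by ring
      _ = _ := by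
          rw [sum_add_distrib, sum_add_distrib, sum_add_distrib, ← mul_sum, ← mul_sum,
            sum_const, nsmul_eq_mul]
  have k1 := key (fun x => x)
  have k2 := key (fun x => x ^ 2)
  have k3 := key (fun x => x ^ 3)
  set F := ∑ x ∈ T, x with hF
  set F2 := ∑ x ∈ T, x ^ 2 with hF2
  set F3 := ∑ x ∈ T, x ^ 3 with hF3
  have e1 : u - v = M * a := by linear_combination s1 - k1
  have e2 : u ^ 2 - v ^ 2 = 2 * a * F + M * a ^ 2 := by linear_combination s2 - k2
  have e3 : u ^ 3 - v ^ 3 = 3 * a * F2 + 3 * a ^ 2 * F + M * a ^ 3 := by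
    linear_combination s3 - k3
  have g2 : M * (u + v) = 2 * F + M * a := by
    apply mul_left_cancel₀ ha
    linear_combination e2 - (u + v) * e1
  have g3 : M * (u ^ 2 + u * v + v ^ 2) = 3 * F2 + 3 * a * F + M * a ^ 2 := by
    apply mul_left_cancel₀ ha
    linear_combination e3 - (u ^ 2 + u * v + v ^ 2) * e1
  linear_combination (-4 * M) * g3 + (3 * (M * (u + v) + 2 * F + M * a)) * g2 +
    (M ^ 2 * (u - v + M * a)) * e1

lemma PS11_eq_univ [NeZero q] (hq : q.Prime) {S : Finset (ZMod q)} (h0 : (0 : ZMod q) ∉ S)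
    (hb : q + 1 ≤ 2 * S.card) : PS11 S = Finset.univ := by
  haveI : Fact q.Prime := ⟨hq⟩
  by_contra hne
  obtain ⟨w, hw⟩ : ∃ w, w ∉ PS11 S := by
    by_contra h
    push_neg at h
    exact hne (eq_univ_iff_forall.mpr h)
  have hw0 : w ≠ 0 := fun h => hw (h ▸ zero_mem_PS11 S)
  have hwS : w ∉ S := fun h => hw (mem_PS11_of_mem h)
  have hsub : ∀ a ∈ S, w - a ∈ S → w = a + a := by
    intro a haS hwa
    by_contra hne'
    apply hw
    refine mem_PS11.mpr ⟨{a, w - a}, ?_, ?_⟩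
    · intro y hy
      rcases mem_insert.mp hy with rfl | hy
      · exact haS
      · rw [mem_singleton.mp hy]; exact hwa
    · have hanew : a ≠ w - a := fun h => hne' (by linear_combination -h)
      rw [sum_pair hanew]
      simp
  set B := S.image (fun x => w - x) with hB
  have hcardB : B.card = S.card := card_image_of_injective _ sub_right_injective
  have hUB : S ∪ B ⊆ Finset.univ \ {0, w} := by
    intro y hy
    rw [mem_sdiff, mem_insert, mem_singleton]
    refine ⟨mem_univ _, ?_⟩
    push_neg
    rcases mem_union.mp hy with hyS | hyB
    · exact ⟨fun h => h0 (h ▸ hyS), fun h => hwS (h ▸ hyS)⟩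
    · obtain ⟨x, hx, rfl⟩ := mem_image.mp hyB
      constructor
      · intro h
        have : w = x := by linear_combination h
        exact hwS (this ▸ hx)
      · intro h
        have : x = 0 := by linear_combination -h
        exact h0 (this ▸ hx)
  have hcard_sdiff : (Finset.univ \ ({0, w} : Finset (ZMod q))).card = q - 2 := by
    rw [card_sdiff_of_subset (subset_univ _), card_univ, ZMod.card,
      card_insert_of_notMem (by simpa using hw0.symm), card_singleton]
  have hint : 3 ≤ (S ∩ B).card := by
    have h1 : (S ∪ B).card ≤ q - 2 := hcard_sdiff ▸ card_le_card hUB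
    have h2 := card_union_add_card_inter S B
    have h3 : S ⊆ Finset.univ.erase 0 := fun y hy =>
      mem_erase.mpr ⟨fun h' => h0 (h' ▸ hy), mem_univ _⟩
    have h4 := card_le_card h3
    rw [card_erase_of_mem (mem_univ _), card_univ, ZMod.card] at h4
    omega
  have hq2 : q ≠ 2 := by
    intro h
    have h3 : S ⊆ Finset.univ.erase 0 := fun y hy =>
      mem_erase.mpr ⟨fun h' => h0 (h' ▸ hy), mem_univ _⟩
    have h4 := card_le_card h3
    rw [card_erase_of_mem (mem_univ _), card_univ, ZMod.card] at h4
    omega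
  have h2ne : (2 : ZMod q) ≠ 0 := by
    have : ((2 : ℕ) : ZMod q) ≠ 0 := by
      intro h
      rw [ZMod.natCast_eq_zero_iff] at h
      exact hq2 ((Nat.prime_dvd_prime_iff_eq hq Nat.prime_two).mp h)
    simpa using this
  have hle : (S ∩ B).card ≤ 1 := by
    apply card_le_one.mpr
    intro x hx y hy
    have hxS := mem_of_mem_inter_left hx
    have hxB := mem_of_mem_inter_right hx
    have hyS := mem_of_mem_inter_left hy
    have hyB := mem_of_mem_inter_right hy
    obtain ⟨x', hx', hxx⟩ := mem_image.mp hxB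
    obtain ⟨y', hy', hyy⟩ := mem_image.mp hyB
    have hx2 : w = x + x := hsub x hxS (by rw [show w - x = x' by linear_combination hxx]; exact hx')
    have hy2 : w = y + y := hsub y hyS (by rw [show w - y = y' by linear_combination hyy]; exact hy')
    have : (2 : ZMod q) * (x - y) = 0 := by linear_combination hy2 - hx2
    rcases mul_eq_zero.mp this with h | h
    · exact absurd h h2ne
    · exact sub_eq_zero.mp h
  omega

lemma key_ind [NeZero q] (hq : q.Prime) :
    ∀ k : ℕ, ∀ S : Finset (ZMod q), (0 : ZMod q) ∉ S → S.card = k + 2 → 2 * k + 3 ≤ q →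
      2 * k + 3 ≤ (PS11 S).card := by
  haveI : Fact q.Prime := ⟨hq⟩
  intro k
  induction k with
  | zero =>
    intro S h0 hcard hqq
    obtain ⟨a, b, hab, rfl⟩ := card_eq_two.mp hcard
    have ha : a ≠ 0 := fun h => h0 (by simp [← h])
    have hb : b ≠ 0 := fun h => h0 (by simp [← h])
    have hsub : ({0, a, b} : Finset (ZMod q)) ⊆ PS11 {a, b} := by
      intro y hy
      rcases mem_insert.mp hy with rfl | hy
      · exact zero_mem_PS11 _
      rcases mem_insert.mp hy with rfl | hy
      · exact mem_PS11_of_mem (by simp)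
      · rw [mem_singleton.mp hy]; exact mem_PS11_of_mem (by simp)
    have h3 : ({0, a, b} : Finset (ZMod q)).card = 3 := by
      rw [card_insert_of_notMem (by simp [ha.symm, hb.symm]),
        card_insert_of_notMem (by simpa using hab), card_singleton]
    have := card_le_card hsub
    omega
  | succ k ih =>
    intro S h0 hcard hqq
    by_contra hcon
    push_neg at hcon
    set T := PS11 S with hT
    have hm : T.card ≤ 2 * k + 4 := by omega
    have h0T : (0 : ZMod q) ∈ T := zero_mem_PS11 S
    rcases eq_or_lt_of_le hqq with hqe | hql
    · have huniv : PS11 S = Finset.univ := PS11_eq_univ hq h0 (by omega)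
      rw [← hT] at huniv
      rw [huniv, card_univ, ZMod.card] at hm
      omega
    · have hq6 : 2 * k + 6 ≤ q := hql
      have hTlow : ∀ a ∈ S, 2 * k + 3 ≤ (PS11 (S.erase a)).card := fun a ha =>
        ih _ (fun h => h0 (mem_of_mem_erase h))
          (by rw [card_erase_of_mem ha, hcard]; omega) (by omega)
      set M := (T.card : ZMod q) with hM
      set F := ∑ x ∈ T, x with hF
      set F2 := ∑ x ∈ T, x ^ 2 with hF2
      have hkey : ∀ a ∈ S, 12 * M * F2 = 12 * F ^ 2 + (M ^ 4 - M ^ 2) * a ^ 2 := by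
        intro a haS
        have ha0 : a ≠ 0 := fun h => h0 (h ▸ haS)
        set T' := PS11 (S.erase a) with hT'
        have hrec : T = T' ∪ T'.image (· + a) := PS11_erase_union haS
        have hT'T : T' ⊆ T := by rw [hrec]; exact subset_union_left
        have himT : T'.image (· + a) ⊆ T := by rw [hrec]; exact subset_union_right
        set A := T.image (· + a) with hA
        have hAcard : A.card = T.card := card_image_of_injective _ (add_left_injective a)
        have hsub2 : T'.image (· + a) ⊆ A ∩ T :=
          subset_inter (image_subset_image hT'T) himT
        have hAT : T.card - 1 ≤ (A ∩ T).card := by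
          have h1 := card_le_card hsub2
          rw [card_image_of_injective _ (add_left_injective a)] at h1
          have h2 := hTlow a haS
          rw [← hT'] at h2
          omega
        have hsd : (A \ T).card ≤ 1 := by
          have h1 := card_inter_add_card_sdiff A T
          omega
        rcases Nat.le_one_iff_eq_zero_or_eq_one.mp hsd with h | h
        · exfalso
          have hAsub : A ⊆ T := sdiff_eq_empty_iff_subset.mp (card_eq_zero.mp h)
          have hAT' : A = T := eq_of_subset_of_card_le hAsub (le_of_eq hAcard.symm)
          have huniv := shift_univ hq ha0 ⟨0, h0T⟩ hAT'
          rw [huniv, card_univ, ZMod.card] at hm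
          omega
        · obtain ⟨u, hu⟩ := card_eq_one.mp h
          have hVc : (T \ A).card = 1 := by
            have h1 := card_inter_add_card_sdiff A T
            have h2 := card_inter_add_card_sdiff T A
            rw [inter_comm] at h2
            omega
          obtain ⟨v, hv⟩ := card_eq_one.mp hVc
          exact moment_eq hq ha0 hu hv
      obtain ⟨t, hts, ht3⟩ := Finset.exists_subset_card_eq (show 3 ≤ S.card by omega)
      obtain ⟨a, b, c, hab, hac, hbc, rfl⟩ := card_eq_three.mp ht3
      have haS : a ∈ S := hts (by simp)
      have hbS : b ∈ S := hts (by simp)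
      have hcS : c ∈ S := hts (by simp)
      have h2m : 2 ≤ T.card := by
        have : ({0, a} : Finset (ZMod q)).card ≤ T.card := by
          apply card_le_card
          intro y hy
          rcases mem_insert.mp hy with rfl | hy
          · exact h0T
          · rw [mem_singleton.mp hy]; exact mem_PS11_of_mem haS
        have ha0 : a ≠ 0 := fun h => h0 (h ▸ haS)
        rw [card_insert_of_notMem (by simpa using ha0.symm), card_singleton] at this
        omega
      have hMne : M ^ 4 - M ^ 2 ≠ 0 := by
        have hM0 : M ≠ 0 := cast_ne_zero_of_lt (by omega) (by omega)
        have hM1 : M - 1 ≠ 0 := by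
          have hcast : ((T.card - 1 : ℕ) : ZMod q) = M - 1 := by
            rw [Nat.cast_sub (by omega)]; simp [hM]
          rw [← hcast]
          exact cast_ne_zero_of_lt (by omega) (by omega)
        have hM2 : M + 1 ≠ 0 := by
          have hcast : ((T.card + 1 : ℕ) : ZMod q) = M + 1 := by push_cast; rfl
          rw [← hcast]
          exact cast_ne_zero_of_lt (by omega) (by omega)
        have hfac : M ^ 4 - M ^ 2 = M * (M * ((M - 1) * (M + 1))) := by ring
        rw [hfac]
        exact mul_ne_zero hM0 (mul_ne_zero hM0 (mul_ne_zero hM1 hM2))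
      have hsq : ∀ x ∈ S, ∀ y ∈ S, x ≠ y → y = -x := by
        intro x hx y hy hxy
        have e1 := hkey x hx
        have e2 := hkey y hy
        have hz : (M ^ 4 - M ^ 2) * ((x - y) * (x + y)) = 0 := by
          linear_combination e2 - e1
        rcases mul_eq_zero.mp hz with h | h
        · exact absurd h hMne
        rcases mul_eq_zero.mp h with h | h
        · exact absurd (sub_eq_zero.mp h) hxy
        · linear_combination h
      have h1 : b = -a := hsq a haS b hbS hab
      have h2 : c = -a := hsq a haS c hcS hac
      exact hbc (h1.trans h2.symm)

theorem stmt11 (q : ℕ) (hq : q.Prime) (S : Finset (ZMod q))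
    (h0 : (0 : ZMod q) ∉ S) (l : ℕ) (hl : 2 ≤ l) (hcard : S.card = l) :
    min q (2 * l - 1) ≤ (insert (0 : ZMod q) (sumsNE S)).card := by
  haveI : NeZero q := ⟨hq.ne_zero⟩
  rw [sums0_eq]
  rcases le_or_gt q (2 * l - 1) with h | h
  · have huniv : PS11 S = Finset.univ := PS11_eq_univ hq h0 (by omega)
    rw [huniv, card_univ, ZMod.card]
    exact min_le_left _ _
  · have hk := key_ind hq (l - 2) S h0 (by omega) (by omega)
    refine le_trans (min_le_right _ _) ?_
    omega
end

section
/- Let p ≥ 7 be prime and let a₁ + H, ..., a_t + H be t ≥ ⌊2√(p-2)⌋ distinct nonzero elements of a cyclic group G/H of prime order p. Then for every x ∈ G/H there exist integers f₁, ..., f_t with 1 ≤ fᵢ ≤ 2 for all i such that x = f₁(a₁+H) + ... + f_t(a_t+H). -/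
open Finset MvPolynomial

section CN
variable {F : Type*} [Field F] [DecidableEq F]


variable {F : Type*} [Field F] [DecidableEq F]

lemma lag_pow_sum (S : Finset F) (n : ℕ) (hS : S.card = n + 1) (k : ℕ) (hk : k ≤ n) :
    ∑ x ∈ S, x ^ k * (∏ y ∈ S.erase x, (x - y))⁻¹ = if k = n then 1 else 0 := by
  have hinj : Set.InjOn id (S : Set F) := Function.injective_id.injOn
  have hdeg : (Polynomial.X ^ k : Polynomial F).degree < S.card := by
    rw [Polynomial.degree_X_pow, hS]; exact_mod_cast Nat.lt_succ_of_le hk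
  have h1 := Lagrange.eq_interpolate (f := (Polynomial.X ^ k : Polynomial F)) hinj hdeg
  have h2 := congrArg (fun q => Polynomial.coeff q n) h1
  simp only [Lagrange.interpolate_apply, Polynomial.finset_sum_coeff,
    Polynomial.coeff_C_mul, Polynomial.coeff_X_pow, id_eq, Polynomial.eval_pow,
    Polynomial.eval_X] at h2
  have hbc : ∀ x ∈ S, (Lagrange.basis S id x).coeff n =
      (∏ y ∈ S.erase x, (x - y))⁻¹ := by
    intro x hx
    have hnd : (Lagrange.basis S id x).natDegree = n := by
      rw [Lagrange.natDegree_basis hinj hx, hS]; rfl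
    rw [← hnd, Polynomial.coeff_natDegree, Lagrange.basis, Polynomial.leadingCoeff_prod]
    rw [← prod_inv_distrib]
    refine Finset.prod_congr rfl fun y hy => ?_
    rw [Lagrange.basisDivisor, Polynomial.leadingCoeff_mul, Polynomial.leadingCoeff_C,
      (Polynomial.monic_X_sub_C (id y)).leadingCoeff, mul_one]; rfl
  rw [Finset.sum_congr rfl (fun x hx => by rw [hbc x hx])] at h2
  rw [← h2]
  simp [eq_comm]

-- real statement:
lemma cn_coeff_formula' {n : ℕ} (S : Fin n → Finset F) (t : Fin n → ℕ)
    (hcard : ∀ i, (S i).card = t i + 1)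
    (f : MvPolynomial (Fin n) F)
    (hdeg : f.totalDegree ≤ ∑ i, t i) :
    coeff (Finsupp.equivFunOnFinite.symm t) f =
      ∑ s ∈ Fintype.piFinset S, eval s f *
        ∏ i, (∏ y ∈ (S i).erase (s i), (s i - y))⁻¹ := by
  have key : ∀ v : Fin n →₀ ℕ, v ∈ f.support →
      (∑ s ∈ Fintype.piFinset S, (∏ i, (s i) ^ v i) *
        ∏ i, (∏ y ∈ (S i).erase (s i), (s i - y))⁻¹)
      = if v = Finsupp.equivFunOnFinite.symm t then 1 else 0 := by
    intro v hv
    have hvs : ∑ i, v i ≤ ∑ i, t i := by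
      refine le_trans ?_ hdeg
      have := MvPolynomial.le_totalDegree hv
      rwa [Finsupp.sum_fintype] at this
      intro; rfl
    have hsum : ∀ s ∈ Fintype.piFinset S,
        (∏ i, (s i) ^ v i) * ∏ i, (∏ y ∈ (S i).erase (s i), (s i - y))⁻¹
        = ∏ i, ((s i) ^ v i * (∏ y ∈ (S i).erase (s i), (s i - y))⁻¹) := by
      intro s _; rw [← Finset.prod_mul_distrib]
    rw [Finset.sum_congr rfl hsum, ← Finset.prod_univ_sum S (fun i x => x ^ v i * (∏ y ∈ (S i).erase x, (x - y))⁻¹)]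
    by_cases hle : ∀ i, v i ≤ t i
    · have hfac : ∀ i : Fin n,
          (∑ x ∈ S i, x ^ v i * (∏ y ∈ (S i).erase x, (x - y))⁻¹)
          = if v i = t i then 1 else 0 := fun i => lag_pow_sum _ _ (hcard i) _ (hle i)
      rw [Finset.prod_congr rfl fun i _ => hfac i]
      by_cases hvt : v = Finsupp.equivFunOnFinite.symm t
      · have : ∀ i, v i = t i := fun i => by rw [hvt]; simp
        rw [if_pos hvt]
        simp [this]
      · rw [if_neg hvt]
        have : ∃ i, v i ≠ t i := by
          by_contra hc
          push_neg at hc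
          exact hvt (Finsupp.ext fun i => by simp [hc i])
        obtain ⟨i, hi⟩ := this
        exact Finset.prod_eq_zero (Finset.mem_univ i) (by rw [if_neg hi])
    · push_neg at hle
      obtain ⟨i, hi⟩ := hle
      have : ∃ j, v j < t j := by
        by_contra hc
        push_neg at hc
        have : ∑ i, t i < ∑ i, v i := by
          refine Finset.sum_lt_sum (fun j _ => hc j) ⟨i, Finset.mem_univ i, hi⟩
        omega
      obtain ⟨j, hj⟩ := this
      have hij : v j ≠ t j := Nat.ne_of_lt hj
      have hfj := lag_pow_sum (S j) (t j) (hcard j) (v j) (le_of_lt hj)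
      have hvt : v ≠ Finsupp.equivFunOnFinite.symm t := by
        intro h; apply hij; rw [h]; simp
      rw [if_neg hvt]
      refine Finset.prod_eq_zero (Finset.mem_univ j) ?_
      rw [hfj, if_neg hij]
  conv_lhs => rw [f.as_sum]
  rw [MvPolynomial.coeff_sum]
  have lhs_eq : ∀ v ∈ f.support, coeff (Finsupp.equivFunOnFinite.symm t) (monomial v (coeff v f))
      = coeff v f * (if v = Finsupp.equivFunOnFinite.symm t then 1 else 0) := by
    intro v _
    rw [coeff_monomial]
    by_cases h : v = Finsupp.equivFunOnFinite.symm t <;> simp [h]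
  rw [Finset.sum_congr rfl lhs_eq]
  have rhs_eq : ∀ s ∈ Fintype.piFinset S,
      eval s f * ∏ i, (∏ y ∈ (S i).erase (s i), (s i - y))⁻¹
      = ∑ v ∈ f.support, coeff v f *
          ((∏ i, (s i) ^ v i) * ∏ i, (∏ y ∈ (S i).erase (s i), (s i - y))⁻¹) := by
    intro s _
    conv_lhs => rw [f.as_sum]
    rw [eval_sum, Finset.sum_mul]
    refine Finset.sum_congr rfl fun v _ => ?_
    rw [eval_monomial, mul_assoc]
    congr 2
    rw [Finsupp.prod_fintype]
    intro i; exact pow_zero _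
  rw [Finset.sum_congr rfl rhs_eq, Finset.sum_comm]
  refine Finset.sum_congr rfl fun v hv => ?_
  rw [← Finset.mul_sum, key v hv]

end CN

lemma cn_exists {F : Type*} [Field F] [DecidableEq F] {n : ℕ} (S : Fin n → Finset F)
    (t : Fin n → ℕ)
    (hcard : ∀ i, (S i).card = t i + 1) (f : MvPolynomial (Fin n) F)
    (hdeg : f.totalDegree ≤ ∑ i, t i)
    (hc : coeff (Finsupp.equivFunOnFinite.symm t) f ≠ 0) :
    ∃ s ∈ Fintype.piFinset S, eval s f ≠ 0 := by
  by_contra hcon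
  push_neg at hcon
  rw [cn_coeff_formula' S t hcard f hdeg] at hc
  exact hc (Finset.sum_eq_zero fun s hs => by rw [hcon s hs, zero_mul])


lemma prod_univ_X_pow {R : Type*} [CommSemiring R] {n : ℕ} (g : Fin n → ℕ) :
    (∏ i : Fin n, (X i : MvPolynomial (Fin n) R) ^ g i)
      = monomial (Finsupp.equivFunOnFinite.symm g) 1 := by
  set m : Fin n →₀ ℕ := Finsupp.equivFunOnFinite.symm g with hm
  have hg : ∀ i, g i = m i := fun i => rfl
  rw [← prod_X_pow_eq_monomial (s := m)]
  rw [Finset.prod_subset (Finset.subset_univ m.support)]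
  · exact Finset.prod_congr rfl fun i _ => by rw [hg]
  · intro x _ hx
    rw [Finsupp.notMem_support_iff.mp hx, pow_zero]

lemma coeff_sum_X_pow {R : Type*} [CommSemiring R] {n : ℕ} (k : ℕ) (m : Fin n →₀ ℕ) :
    coeff m ((∑ i : Fin n, (X i : MvPolynomial (Fin n) R)) ^ k) =
      if (∑ i, m i) = k then (Nat.multinomial Finset.univ m : R) else 0 := by
  classical
  rw [Finset.sum_pow_eq_sum_piAntidiag, MvPolynomial.coeff_sum]
  have term : ∀ g : Fin n → ℕ,
      coeff m ((Nat.multinomial Finset.univ g : MvPolynomial (Fin n) R) *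
        ∏ i, (X i : MvPolynomial (Fin n) R) ^ g i)
      = if g = ⇑m then (Nat.multinomial Finset.univ g : R) else 0 := by
    intro g
    rw [prod_univ_X_pow, ← MvPolynomial.C_eq_coe_nat, coeff_C_mul, coeff_monomial]
    have : (Finsupp.equivFunOnFinite.symm g = m) ↔ (g = ⇑m) := by
      rw [Equiv.symm_apply_eq]; exact Iff.rfl
    by_cases hgm : g = ⇑m
    · rw [if_pos (this.mpr hgm), if_pos hgm, mul_one]
    · rw [if_neg (fun hh => hgm (this.mp hh)), if_neg hgm, mul_zero]
  rw [Finset.sum_congr rfl fun g _ => term g]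
  by_cases hs : (∑ i, m i) = k
  · rw [if_pos hs]
    rw [Finset.sum_eq_single_of_mem (⇑m)]
    · rw [if_pos rfl]
    · rw [Finset.mem_piAntidiag]
      exact ⟨hs, fun i _ => Finset.mem_univ i⟩
    · intro g _ hg; rw [if_neg hg]
  · rw [if_neg hs]
    refine Finset.sum_eq_zero fun g hg => ?_
    rw [Finset.mem_piAntidiag] at hg
    have : g ≠ ⇑m := fun hh => hs (by rw [← hg.1]; exact Finset.sum_congr rfl fun i _ => (congrFun hh i).symm)
    rw [if_neg this]

lemma fact_ne_zero (p : ℕ) [hp : Fact p.Prime] {x : ℕ} (hx : x ≤ p - 1) :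
    ((x.factorial : ZMod p) ≠ 0) := by
  intro h
  rw [ZMod.natCast_eq_zero_iff] at h
  have := (Nat.Prime.dvd_factorial hp.out).mp h
  have := hp.out.two_le
  omega

lemma coeff_V_sigma_pow (p : ℕ) [hp : Fact p.Prime] {h : ℕ} (b : Fin h → ℕ)
    (hmono : StrictMono b) (hbp : ∀ i, b i ≤ p - 1) (k : ℕ) (hk : k ≤ p - 1)
    (hsum : ∑ i, b i = k + ∑ i : Fin h, (i : ℕ)) :
    coeff (Finsupp.equivFunOnFinite.symm b)
      ((Matrix.vandermonde (fun i : Fin h => (X i : MvPolynomial (Fin h) (ZMod p)))).det *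
        (∑ i, X i) ^ k) ≠ 0 := by
  classical
  set bb : Fin h →₀ ℕ := Finsupp.equivFunOnFinite.symm b with hbb
  have hbbi : ∀ i, bb i = b i := fun i => rfl
  -- the inverse-factorial matrix
  set N : Matrix (Fin h) (Fin h) (ZMod p) :=
    Matrix.of (fun i j => if (j : ℕ) ≤ b i then (((b i - (j : ℕ)).factorial : ZMod p))⁻¹ else 0)
    with hN
  -- Step 1: the coefficient equals k! * det N
  have step1 : coeff bb
      ((Matrix.vandermonde (fun i : Fin h => (X i : MvPolynomial (Fin h) (ZMod p)))).det *
        (∑ i, X i) ^ k) = (k.factorial : ZMod p) * N.det := by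
    rw [Matrix.det_apply, Finset.sum_mul, MvPolynomial.coeff_sum]
    rw [Matrix.det_apply, Finset.mul_sum]
    refine Finset.sum_congr rfl fun π _ => ?_
    rw [smul_mul_assoc, MvPolynomial.coeff_smul]
    have hprod : (∏ i : Fin h, Matrix.vandermonde
          (fun i : Fin h => (X i : MvPolynomial (Fin h) (ZMod p))) (π i) i)
        = monomial (Finsupp.equivFunOnFinite.symm fun j => ((π.symm j : Fin h) : ℕ)) 1 := by
      rw [← prod_univ_X_pow]
      rw [← Equiv.prod_comp π (fun j => (X j : MvPolynomial (Fin h) (ZMod p)) ^ ((π.symm j : Fin h) : ℕ))]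
      refine Finset.prod_congr rfl fun i _ => ?_
      rw [Matrix.vandermonde]
      simp
    rw [hprod, coeff_monomial_mul', one_mul]
    set d : Fin h →₀ ℕ := Finsupp.equivFunOnFinite.symm fun j => ((π.symm j : Fin h) : ℕ) with hd
    have hdi : ∀ j, d j = ((π.symm j : Fin h) : ℕ) := fun j => rfl
    have hsd : ∑ j, d j = ∑ i : Fin h, (i : ℕ) := by
      simp only [hdi]
      exact Equiv.sum_comp π.symm (fun i : Fin h => (i : ℕ))
    by_cases hle : d ≤ bb
    · rw [if_pos hle]
      have hsub : ∑ j, (bb - d) j = k := by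
        have : ∀ j, (bb - d) j = b j - d j := fun j => by
          rw [Finsupp.tsub_apply]; rfl
        rw [Finset.sum_congr rfl fun j _ => this j]
        have hle' : ∀ j, d j ≤ b j := fun j => Finsupp.le_def.mp hle j
        have := Finset.sum_tsub_distrib (s := Finset.univ) (f := b) (g := fun j => d j)
          (fun j _ => hle' j)
        rw [this, hsum, hsd]
        omega
      rw [coeff_sum_X_pow, if_pos hsub]
      -- multinomial = k! * prod of inverse factorials
      have hspec := Nat.multinomial_spec Finset.univ ⇑(bb - d)
      have hcast : ((∏ j, ((bb - d) j).factorial : ℕ) : ZMod p) *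
          (Nat.multinomial Finset.univ ⇑(bb - d) : ZMod p) = (k.factorial : ZMod p) := by
        rw [← Nat.cast_mul, hspec]
        norm_cast
        rw [hsub]
      have hfacne : ∀ j : Fin h, (((bb - d) j).factorial : ZMod p) ≠ 0 := by
        intro j
        refine fact_ne_zero p ?_
        have : (bb - d) j ≤ b j := by
          rw [Finsupp.tsub_apply]; exact Nat.sub_le _ _
        exact le_trans this (hbp j)
      have hprodne : ((∏ j, ((bb - d) j).factorial : ℕ) : ZMod p) ≠ 0 := by
        push_cast
        exact Finset.prod_ne_zero_iff.mpr fun j _ => hfacne j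
      -- prod over N
      have key : ∀ i : Fin h, N (π i) i = (((bb - d) (π i)).factorial : ZMod p)⁻¹ := by
        intro i
        have hdpi : d (π i) = (i : ℕ) := by
          rw [hdi, Equiv.symm_apply_apply]
        have hle' : (i : ℕ) ≤ b (π i) := by
          have := Finsupp.le_def.mp hle (π i)
          rwa [hdpi, hbbi] at this
        have hsub2 : (bb - d) (π i) = b (π i) - (i : ℕ) := by
          rw [Finsupp.tsub_apply, hdpi, hbbi]
        rw [hsub2, hN]
        exact if_pos hle'
      have hNprod : (∏ i, N (π i) i) = ∏ j, ((((bb - d) j).factorial : ZMod p))⁻¹ := by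
        rw [Finset.prod_congr rfl fun i _ => key i]
        exact Equiv.prod_comp π (fun j => ((((bb - d) j).factorial : ZMod p))⁻¹)
      have hmult : (Nat.multinomial Finset.univ ⇑(bb - d) : ZMod p) =
          (k.factorial : ZMod p) * ((∏ j, (((bb - d) j).factorial : ZMod p)))⁻¹ := by

        rw [mul_comm, eq_comm, inv_mul_eq_iff_eq_mul₀]
        · rw [eq_comm, mul_comm]
          rw [← hcast]
          push_cast
          ring
        · push_cast at hprodne ⊢
          exact hprodne
      rw [hNprod, mul_smul_comm]
      refine congrArg _ ?_
      rw [hmult, Finset.prod_inv_distrib]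
    · rw [if_neg hle]
      have : ∃ i : Fin h, ¬ ((i : ℕ) ≤ b (π i)) := by
        by_contra hc
        push_neg at hc
        exact hle (Finsupp.le_def.mpr fun j => by
          rw [hdi, hbbi]
          have := hc (π.symm j)
          rwa [Equiv.apply_symm_apply] at this)
      obtain ⟨i, hi⟩ := this
      have : (∏ i, N (π i) i) = 0 :=
        Finset.prod_eq_zero (Finset.mem_univ i) (by rw [hN]; exact if_neg hi)
      rw [this]
      simp
  rw [step1]
  have hple : 1 ≤ p := hp.out.two_le.trans' (by omega)
  refine mul_ne_zero (fact_ne_zero p hk) ?_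
  have hdeg : ∀ j : Fin h, (descPochhammer (ZMod p) (j : ℕ)).natDegree = (j : ℕ) :=
    fun j => descPochhammer_natDegree _ _
  have hmonic : ∀ j : Fin h, (descPochhammer (ZMod p) (j : ℕ)).Monic :=
    fun j => monic_descPochhammer _ _
  have hentry : (Matrix.of fun i j : Fin h => ((b i).factorial : ZMod p) * N i j) =
      Matrix.of (fun i j : Fin h =>
        Polynomial.eval ((b i : ℕ) : ZMod p) (descPochhammer (ZMod p) (j : ℕ))) := by
    ext i j
    rw [Matrix.of_apply, Matrix.of_apply, descPochhammer_eval_eq_descFactorial]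
    by_cases hij : (j : ℕ) ≤ b i
    · rw [hN, Matrix.of_apply, if_pos hij]
      have hfm := Nat.factorial_mul_descFactorial hij
      have hne : (((b i - (j : ℕ)).factorial : ℕ) : ZMod p) ≠ 0 :=
        fact_ne_zero p (by have := hbp i; omega)
      rw [← hfm]
      push_cast
      field_simp
    · rw [hN, Matrix.of_apply, if_neg hij, mul_zero]
      rw [Nat.descFactorial_eq_zero_iff_lt.mpr (by omega)]
      norm_cast
  have hNdet : (∏ i, ((b i).factorial : ZMod p)) * N.det =
      (Matrix.vandermonde (fun i => ((b i : ℕ) : ZMod p))).det := by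
    rw [← Matrix.det_mul_column (fun i => ((b i).factorial : ZMod p)) N]
    rw [Matrix.det_eval_matrixOfPolynomials_eq_det_vandermonde
      (fun i => ((b i : ℕ) : ZMod p)) (fun j => descPochhammer (ZMod p) (j : ℕ)) hdeg hmonic]
    rw [hentry]
  have hvd : (Matrix.vandermonde (fun i => ((b i : ℕ) : ZMod p))).det ≠ 0 := by
    rw [Matrix.det_vandermonde]
    refine Finset.prod_ne_zero_iff.mpr fun i _ => Finset.prod_ne_zero_iff.mpr fun j hj => ?_
    have hij : i < j := Finset.mem_Ioi.mp hj
    have hlt : b i < b j := hmono hij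
    have : ((b j : ℕ) : ZMod p) - ((b i : ℕ) : ZMod p) = ((b j - b i : ℕ) : ZMod p) := by
      rw [Nat.cast_sub (le_of_lt hlt)]
    rw [this]
    intro hzero
    rw [ZMod.natCast_eq_zero_iff] at hzero
    have h1 : 0 < b j - b i := by omega
    have h2 : b j - b i < p := by have := hbp j; omega
    exact absurd (Nat.le_of_dvd h1 hzero) (by omega)
  intro hdet0
  rw [hdet0, mul_zero] at hNdet
  exact hvd hNdet.symm

section DegRed
variable {F : Type*} [Field F] [DecidableEq F]
lemma td_factor_le {n : ℕ} (g : MvPolynomial (Fin n) F) (hg : g.totalDegree ≤ 1) (c : F) :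
    (g - C c).totalDegree ≤ 1 := by
  refine le_trans (totalDegree_sub g (C c)) ?_
  simp [hg, totalDegree_C]

lemma td_prod_le {n : ℕ} (g : MvPolynomial (Fin n) F) (hg : g.totalDegree ≤ 1) (s : Finset F) :
    (∏ c ∈ s, (g - C c)).totalDegree ≤ s.card := by
  have h1 : (∏ c ∈ s, (g - C c)).totalDegree ≤ ∑ c ∈ s, (g - C c).totalDegree :=
        totalDegree_finset_prod s (fun c => g - C c)
  have h2 : ∑ c ∈ s, (g - C c).totalDegree ≤ ∑ _c ∈ s, 1 :=
    Finset.sum_le_sum fun c _ => td_factor_le g hg c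
  have h3 : (∑ _c ∈ s, 1) = s.card := by simp
  omega

lemma td_prod_sub_pow {n : ℕ} (g : MvPolynomial (Fin n) F) (hg : g.totalDegree ≤ 1)
    (s : Finset F) :
    ((∏ c ∈ s, (g - C c)) - g ^ s.card).totalDegree ≤ s.card - 1 := by
  induction s using Finset.cons_induction with
  | empty => simp
  | cons c s hcs ih =>
    rcases Finset.eq_empty_or_nonempty s with rfl | hs
    · simp only [Finset.cons_empty, Finset.prod_singleton, Finset.card_singleton, pow_one]
      have : g - C c - g = - C c := by ring
      rw [this]
      simp [totalDegree_neg, totalDegree_C]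
    · rw [Finset.prod_cons, Finset.card_cons]
      have key : (g - C c) * (∏ c ∈ s, (g - C c)) - g ^ (s.card + 1)
          = g * ((∏ c ∈ s, (g - C c)) - g ^ s.card) - C c * (∏ c ∈ s, (g - C c)) := by
        ring
      rw [key]
      have h1 : (g * ((∏ c ∈ s, (g - C c)) - g ^ s.card)).totalDegree ≤ s.card := by
        refine le_trans (totalDegree_mul _ _) ?_
        have := ih
        have hs1 : 1 ≤ s.card := Finset.card_pos.mpr hs
        omega
      have h2 : (C c * (∏ c ∈ s, (g - C c))).totalDegree ≤ s.card := by
        refine le_trans (totalDegree_mul _ _) ?_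
        simp only [totalDegree_C, zero_add]
        exact td_prod_le g hg s
      refine le_trans (totalDegree_sub _ _) ?_
      simp only [sup_le_iff]
      omega

lemma sum_support_eq {n : ℕ} (m : Fin n →₀ ℕ) : (∑ i ∈ m.support, m i) = ∑ i, m i :=
  Finset.sum_subset (Finset.subset_univ _) fun x _ hx => Finsupp.notMem_support_iff.mp hx

lemma coeff_reduce {n : ℕ} (m : Fin n →₀ ℕ) (V g : MvPolynomial (Fin n) F) (D : ℕ)
    (hV : V.totalDegree ≤ D) (hg : g.totalDegree ≤ 1) (s : Finset F) (hs : s.Nonempty)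
    (hm : ∑ i, m i = D + s.card) :
    coeff m (V * ∏ c ∈ s, (g - C c)) = coeff m (V * g ^ s.card) := by
  have key : V * (∏ c ∈ s, (g - C c)) - V * g ^ s.card
      = V * ((∏ c ∈ s, (g - C c)) - g ^ s.card) := by ring
  have hzero : coeff m (V * ((∏ c ∈ s, (g - C c)) - g ^ s.card)) = 0 := by
    refine coeff_eq_zero_of_totalDegree_lt ?_
    rw [show (∑ i ∈ m.support, m i) = ∑ i, m i from sum_support_eq m, hm]
    refine lt_of_le_of_lt (totalDegree_mul _ _) ?_
    have := td_prod_sub_pow g hg s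
    have hs1 : 1 ≤ s.card := Finset.card_pos.mpr hs
    omega
  have h2 : coeff m (V * ∏ c ∈ s, (g - C c)) - coeff m (V * g ^ s.card) = 0 := by
    rw [← coeff_sub, key, hzero]
  exact sub_eq_zero.mp h2

end DegRed
-- main ANR-instance lemma
lemma exists_subset_sum (p : ℕ) [hp : Fact p.Prime] {m : ℕ} (e : Fin m → ZMod p)
    (he : Function.Injective e) {h : ℕ} (b : Fin h → ℕ) (hmono : StrictMono b)
    (hbm : ∀ i, b i < m)
    (hsum : ∑ i, b i = (p - 1) + ∑ i : Fin h, (i : ℕ))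
    (y : ZMod p) :
    ∃ s : Finset (Fin m), s.card = h ∧ ∑ i ∈ s, e i = y := by
  classical
  have hp2 := hp.out.two_le
  have hmp : m ≤ p := by
    have := Fintype.card_le_of_injective e he
    rwa [Fintype.card_fin, ZMod.card] at this
  have hbp : ∀ i, b i ≤ p - 1 := fun i => by have := hbm i; omega
  -- grid sets
  set Cs : Fin h → Finset (Fin m) := fun i =>
    (Finset.range (b i + 1)).attachFin (fun x hx => by
      rw [Finset.mem_range] at hx; have := hbm i; omega) with hCs
  set S : Fin h → Finset (ZMod p) := fun i => (Cs i).image e with hS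
  have hcard : ∀ i, (S i).card = b i + 1 := by
    intro i
    rw [hS, Finset.card_image_of_injective _ he, hCs, Finset.card_attachFin,
      Finset.card_range]
  -- the polynomial
  set σp : MvPolynomial (Fin h) (ZMod p) := ∑ i, X i with hσp
  set V : MvPolynomial (Fin h) (ZMod p) :=
    (Matrix.vandermonde (fun i : Fin h => (X i : MvPolynomial (Fin h) (ZMod p)))).det with hV
  set f : MvPolynomial (Fin h) (ZMod p) :=
    V * ∏ c ∈ Finset.univ.erase y, (σp - C c) with hf
  have hVform : V = ∏ i : Fin h, ∏ j ∈ Finset.Ioi i, (X j - X i) :=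
    Matrix.det_vandermonde _
  have hcarde : (Finset.univ.erase y).card = p - 1 := by
    rw [Finset.card_erase_of_mem (Finset.mem_univ y), Finset.card_univ, ZMod.card]
  have htdσ : σp.totalDegree ≤ 1 := by
    rw [hσp]
    refine le_trans (totalDegree_finset_sum _ _) ?_
    simp [totalDegree_X]
  have htdV : V.totalDegree ≤ ∑ i : Fin h, (i : ℕ) := by
    rw [hVform]
    refine le_trans (totalDegree_finset_prod _ _) ?_
    have step : ∀ i : Fin h, (∏ j ∈ Finset.Ioi i, ((X j : MvPolynomial (Fin h) (ZMod p)) - X i)).totalDegree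
        ≤ (Finset.Ioi i).card := by
      intro i
      refine le_trans (totalDegree_finset_prod _ _) ?_
      have : ∀ j ∈ Finset.Ioi i, ((X j : MvPolynomial (Fin h) (ZMod p)) - X i).totalDegree ≤ 1 := by
        intro j _
        refine le_trans (totalDegree_sub _ _) ?_
        simp [totalDegree_X]
      have h5 : ∑ j ∈ Finset.Ioi i, ((X j : MvPolynomial (Fin h) (ZMod p)) - X i).totalDegree
          ≤ ∑ _j ∈ Finset.Ioi i, (1:ℕ) := Finset.sum_le_sum this
      have h6 : (∑ _j ∈ Finset.Ioi i, (1:ℕ)) = (Finset.Ioi i).card := by simp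
      omega
    refine le_trans (Finset.sum_le_sum fun i _ => step i) ?_
    have h1 : ∀ i : Fin h, (Finset.Ioi i).card = h - 1 - (i : ℕ) := fun i => Fin.card_Ioi i
    rw [Finset.sum_congr rfl fun i _ => h1 i,
      ← Equiv.sum_comp (Fin.revPerm (n := h)) (fun i : Fin h => (i : ℕ))]
    refine le_of_eq (Finset.sum_congr rfl fun i _ => ?_)
    have h2 : ((Fin.revPerm i : Fin h) : ℕ) = h - 1 - (i : ℕ) := by
      simp [Fin.rev]
      omega
    omega
  have hdegf : f.totalDegree ≤ ∑ i, b i := by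
    rw [hf]
    refine le_trans (totalDegree_mul _ _) ?_
    have h1 := td_prod_le σp htdσ (Finset.univ.erase y)
    rw [hcarde] at h1
    rw [hsum]
    omega
  have hne : (Finset.univ.erase y).Nonempty := by
    rw [← Finset.card_pos, hcarde]; omega
  have hcoeff : coeff (Finsupp.equivFunOnFinite.symm b) f ≠ 0 := by
    rw [hf]
    have hm2 : ∑ i, (Finsupp.equivFunOnFinite.symm b : Fin h →₀ ℕ) i
        = (∑ i : Fin h, (i : ℕ)) + (Finset.univ.erase y).card := by
      have h3 : ∀ i, (Finsupp.equivFunOnFinite.symm b : Fin h →₀ ℕ) i = b i := fun _ => rfl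
      rw [Finset.sum_congr rfl fun i _ => h3 i, hsum, hcarde]
      omega
    have hred := coeff_reduce (Finsupp.equivFunOnFinite.symm b) V σp
      (∑ i : Fin h, (i : ℕ)) htdV htdσ (Finset.univ.erase y) hne hm2
    rw [hred, hcarde]
    exact coeff_V_sigma_pow p b hmono hbp (p-1) le_rfl hsum
  obtain ⟨s, hsmem, hsne⟩ := cn_exists S b hcard f hdegf hcoeff
  rw [hf, map_mul] at hsne
  have hVne := left_ne_zero_of_mul hsne
  have hPne := right_ne_zero_of_mul hsne
  have hdist : Function.Injective s := by
    have key : ∀ i j : Fin h, i < j → s i ≠ s j := by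
      intro i j hlt hij
      apply hVne
      rw [hVform, map_prod]
      refine Finset.prod_eq_zero (Finset.mem_univ i) ?_
      rw [map_prod]
      refine Finset.prod_eq_zero (Finset.mem_Ioi.mpr hlt) ?_
      rw [map_sub, eval_X, eval_X]
      exact sub_eq_zero.mpr hij.symm
    intro i j hij
    by_contra hne2
    rcases lt_or_gt_of_ne hne2 with hlt | hlt
    · exact key i j hlt hij
    · exact key j i hlt hij.symm
  have hevalσ : eval s σp = ∑ i, s i := by
    rw [hσp, map_sum]
    exact Finset.sum_congr rfl fun i _ => eval_X _
  have hsum_s : ∑ i, s i = y := by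
    by_contra hne2
    apply hPne
    rw [map_prod]
    refine Finset.prod_eq_zero (Finset.mem_erase.mpr ⟨hne2, Finset.mem_univ _⟩) ?_
    rw [map_sub, hevalσ, eval_C]
    exact sub_self _
  have hpre : ∀ i : Fin h, ∃ j : Fin m, j ∈ Cs i ∧ e j = s i := by
    intro i
    have h4 := Fintype.mem_piFinset.mp hsmem i
    rw [hS] at h4
    obtain ⟨j, hj, hje⟩ := Finset.mem_image.mp h4
    exact ⟨j, hj, hje⟩
  choose jf hjf1 hjf2 using hpre
  have hjinj : Function.Injective jf := fun i1 i2 hh =>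
    hdist (by rw [← hjf2, ← hjf2, hh])
  refine ⟨Finset.univ.image jf, ?_, ?_⟩
  · rw [Finset.card_image_of_injective _ hjinj, Finset.card_univ, Fintype.card_fin]
  · rw [Finset.sum_image (fun i _ j _ hh => hjinj hh),
      Finset.sum_congr rfl fun i _ => hjf2 i]
    exact hsum_s

lemma numeric_bound (p t : ℕ) (hp7 : 7 ≤ p) (hodd : p % 2 = 1)
    (ht : Nat.sqrt (4 * (p - 2)) ≤ t) :
    p - 1 ≤ (t + 1) / 2 * ((t + 1) - (t + 1) / 2) := by
  set s := Nat.sqrt (4 * (p - 2)) with hs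
  have hsq : 4 * (p - 2) < (s + 1) * (s + 1) := by
    have := Nat.lt_succ_sqrt' (4 * (p - 2))
    rwa [pow_two] at this
  have hmm : (s + 1) * (s + 1) ≤ (t + 1) * (t + 1) :=
    Nat.mul_le_mul (by omega) (by omega)
  have hbig : 4 * p - 7 ≤ (t + 1) * (t + 1) := by omega
  rcases Nat.even_or_odd (t + 1) with he | ho
  · obtain ⟨u, hu⟩ := he
    have h2 : (t + 1) / 2 = u := by omega
    rw [h2]
    have h3 : (t + 1) - u = u := by omega
    rw [h3]
    have h4 : (t + 1) * (t + 1) = 4 * (u * u) := by rw [hu]; ring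
    have h5 : 4 * p - 7 ≤ 4 * (u * u) := by omega
    set x := u * u
    omega
  · obtain ⟨u, hu⟩ := ho
    have h2 : (t + 1) / 2 = u := by omega
    rw [h2]
    have h3 : (t + 1) - u = u + 1 := by omega
    rw [h3]
    have h4 : (t + 1) * (t + 1) = 4 * (u * (u + 1)) + 1 := by rw [hu]; ring
    have h6 : Even (u * (u + 1)) := Nat.even_mul_succ_self u
    obtain ⟨v, hv⟩ := h6
    have h5 : 4 * p - 7 ≤ 4 * (u * (u + 1)) + 1 := by omega
    set x := u * (u + 1)
    omega

lemma exists_b (mm hh p : ℕ) (hh1 : 1 ≤ hh) (hhm : hh < mm) (hp : 1 ≤ p - 1)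
    (hle : p - 1 ≤ hh * (mm - hh)) :
    ∃ b : Fin hh → ℕ, StrictMono b ∧ (∀ i, b i < mm) ∧
      ∑ i, b i = (p - 1) + ∑ i : Fin hh, (i : ℕ) := by
  set w := mm - hh with hw
  have hw1 : 1 ≤ w := by omega
  set K := p - 1 with hK
  set d := hh * w - K with hd
  set q := d / w with hq
  set r := d % w with hr
  have hdvw : d = q * w + r := by
    rw [hq, hr, Nat.mul_comm]
    exact (Nat.div_add_mod d w).symm
  have hrw : r < w := Nat.mod_lt _ (by omega)
  have hdlt : d < hh * w := by omega
  have hqh : q < hh := by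
    rw [hq, Nat.div_lt_iff_lt_mul (by omega)]
    omega
  set g : ℕ → ℕ := fun i => if i < q then w else if i = q then r else 0 with hg
  set c : ℕ → ℕ := fun i => w - g i with hc
  refine ⟨fun i => (i : ℕ) + c (i : ℕ), ?_, ?_, ?_⟩
  · intro i j hij
    have hij' : (i : ℕ) < (j : ℕ) := hij
    have : c (i : ℕ) ≤ c (j : ℕ) := by
      simp only [hc, hg]
      split_ifs <;> omega
    simp only []
    omega
  · intro i
    have hi : (i : ℕ) < hh := i.isLt
    have : c (i : ℕ) ≤ w := by simp only [hc]; omega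
    simp only []
    omega
  · have hsplit : ∀ i : ℕ, g i = (if i < q then w else 0) + (if i = q then r else 0) := by
      intro i
      simp only [hg]
      split_ifs <;> omega
    have hgle : ∀ i : ℕ, g i ≤ w := by
      intro i; simp only [hg]; split_ifs <;> omega
    have hsumg : ∑ i ∈ Finset.range hh, g i = d := by
      rw [Finset.sum_congr rfl fun i _ => hsplit i, Finset.sum_add_distrib]
      have e1 : ∑ i ∈ Finset.range hh, (if i < q then w else 0)
          = ∑ i ∈ Finset.range q, (if i < q then w else 0) :=
        (Finset.sum_subset (Finset.range_subset_range.mpr (le_of_lt hqh))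
          (fun x hx hnx => by
            rw [Finset.mem_range] at hx
            rw [Finset.mem_range] at hnx
            exact if_neg (by omega))).symm
      have e2 : ∑ i ∈ Finset.range q, (if i < q then w else 0) = q * w := by
        rw [Finset.sum_congr rfl fun x hx => if_pos (Finset.mem_range.mp hx)]
        simp [mul_comm]
      have e3 : ∑ i ∈ Finset.range hh, (if i = q then r else 0) = r := by
        rw [Finset.sum_ite_eq' (Finset.range hh) q (fun _ => r)]
        rw [if_pos (Finset.mem_range.mpr hqh)]
      omega
    have hsumc : ∑ i ∈ Finset.range hh, c i = K := by
      simp only [hc]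
      rw [Finset.sum_tsub_distrib (s := Finset.range hh) (f := fun _ => w) (g := g) (fun i _ => hgle i), hsumg]
      simp only [Finset.sum_const, Finset.card_range, smul_eq_mul]
      omega
    rw [Finset.sum_add_distrib]
    have e4 : ∑ i : Fin hh, c (i : ℕ) = ∑ i ∈ Finset.range hh, c i :=
      (Finset.sum_range fun i => c i).symm
    omega

theorem stmt15 (p t : ℕ) (hp : p.Prime) (hp7 : 7 ≤ p)
    (ht : Nat.sqrt (4 * (p - 2)) ≤ t)
    (a : Fin t → ZMod p) (hinj : Function.Injective a) (h0 : ∀ i, a i ≠ 0) :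
    ∀ x : ZMod p, ∃ f : Fin t → ℕ, (∀ i, 1 ≤ f i ∧ f i ≤ 2) ∧
      x = ∑ i, f i • a i := by
  intro x
  haveI : Fact p.Prime := ⟨hp⟩
  have hodd : p % 2 = 1 := Nat.odd_iff.mp (hp.odd_of_ne_two (by omega))
  have ht4 : 4 ≤ t := le_trans (Nat.le_sqrt.mpr (by omega)) ht
  -- the enumeration of {0} ∪ A
  set e : Fin (t + 1) → ZMod p := Fin.cases 0 a with he_def
  have he : Function.Injective e := by
    intro i j hij
    induction i using Fin.cases with
    | zero => induction j using Fin.cases with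
      | zero => rfl
      | succ j' =>
        exfalso
        apply h0 j'
        rw [he_def] at hij
        simpa using hij.symm
    | succ i' => induction j using Fin.cases with
      | zero =>
        exfalso
        apply h0 i'
        rw [he_def] at hij
        simpa using hij
      | succ j' =>
        have : a i' = a j' := by
          rw [he_def] at hij
          simpa using hij
        rw [hinj this]
  set hh : ℕ := (t + 1) / 2 with hhh
  have hh1 : 1 ≤ hh := by omega
  have hhm : hh < t + 1 := by omega
  have hp1 : 1 ≤ p - 1 := by omega
  have hle : p - 1 ≤ hh * ((t + 1) - hh) := numeric_bound p t hp7 hodd ht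
  obtain ⟨b, hmono, hbm, hbsum⟩ := exists_b (t + 1) hh p hh1 hhm hp1 hle
  obtain ⟨s, hscard, hssum⟩ := exists_subset_sum p e he b hmono hbm hbsum
    (x - ∑ i, a i)
  refine ⟨fun i => if i.succ ∈ s then 2 else 1, fun i => by simp only []; split_ifs <;> omega, ?_⟩
  have hterm : ∀ i : Fin t, (if i.succ ∈ s then 2 else 1) • a i
      = a i + (if i.succ ∈ s then e i.succ else 0) := by
    intro i
    have : e i.succ = a i := by rw [he_def]; simp
    rw [this]
    split_ifs
    · rw [two_smul]
    · rw [one_smul, add_zero]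
  rw [Finset.sum_congr rfl fun i _ => hterm i, Finset.sum_add_distrib]
  have hsum2 : ∑ i : Fin t, (if i.succ ∈ s then e i.succ else 0) = ∑ j ∈ s, e j := by
    have hrhs : (∑ j ∈ s, e j) = ∑ j : Fin (t + 1), if j ∈ s then e j else 0 := by
      rw [Finset.sum_ite_mem, Finset.univ_inter]
    rw [hrhs, Fin.sum_univ_succ]
    have h00 : (if (0 : Fin (t+1)) ∈ s then e 0 else 0) = 0 := by
      split_ifs <;> simp [he_def]
    rw [h00, zero_add]
  rw [hsum2, hssum]
  ring
end
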